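/- Let H be a complex Hilbert space and let T : H → H be a bounded self-adjoint operator which is positive (⟨Tu, u⟩ ≥ 0 for all u ∈ H). Let r > 0 and assume that the spectrum of T contains no point z with 0 < |z| ≤ r. Then the operator B := (2πi)⁻¹ · ∮_{|λ| = r} (λ·Id − T)⁻¹ dλ, where the integral is the circle integral over the counterclockwise-oriented circle of radius r centered at 0 of the resolvent λ ↦ (λ·Id − T)⁻¹ (which exists in the algebra of bounded operators for every λ on this circle), equals the orthogonal projection of H onto the closed subspace ker T. -/

import Mathlib

open scoped Real

/-- Riesz projection: for a positive bounded self-adjoint operator `T` on a complex Hilbert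
space whose spectrum contains no point `z` with `0 < |z| ≤ r`, the contour integral
`(2πi)⁻¹ ∮_{|λ|=r} (λ·Id − T)⁻¹ dλ` equals the orthogonal projection onto `ker T`. -/
theorem riesz_projection_eq_orthogonal_projection_ker
    (H : Type*) [NormedAddCommGroup H] [InnerProductSpace ℂ H] [CompleteSpace H]
    (T : H →L[ℂ] H) (hT : IsSelfAdjoint T)
    (hpos : ∀ u : H, 0 ≤ (inner ℂ (T u) u : ℂ).re)
    (r : ℝ) (hr : 0 < r)
    (hspec : ∀ z ∈ spectrum ℂ T, ‖z‖ ≤ r → z = 0)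
    (B : H →L[ℂ] H)
    (hB : B = (2 * (π : ℂ) * Complex.I)⁻¹ •
      ∫ θ in (0:ℝ)..(2 * π),
        (Complex.I * (r : ℂ) * Complex.exp ((θ : ℂ) * Complex.I)) •
          Ring.inverse
            (algebraMap ℂ (H →L[ℂ] H) ((r : ℂ) * Complex.exp ((θ : ℂ) * Complex.I)) - T)) :
    ∀ x : H, B x ∈ LinearMap.ker (T : H →ₗ[ℂ] H) ∧ x - B x ∈ (LinearMap.ker (T : H →ₗ[ℂ] H))ᗮ := by
  haveI hN : IsStarNormal T := hT.isStarNormal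
  set φ := cfcHom (R := ℂ) (a := T) hN with hφ
  -- basic facts about the circle and the spectrum
  have habs : ∀ θ : ℝ, ‖(r:ℂ) * Complex.exp ((θ:ℂ) * Complex.I)‖ = r := by
    intro θ
    simp [Complex.norm_exp_ofReal_mul_I, abs_of_pos hr]
  have hne : ∀ (θ : ℝ), ∀ z ∈ spectrum ℂ T,
      (r:ℂ) * Complex.exp ((θ:ℂ) * Complex.I) - z ≠ 0 := by
    intro θ z hz h
    rw [sub_eq_zero] at h
    have h1 : ‖z‖ = r := by rw [← h, habs]
    have h2 : z = 0 := hspec z hz h1.le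
    rw [h2] at h1
    simp at h1
    exact hr.ne' h1.symm
  have hcov : ∀ z : spectrum ℂ T, ‖(z:ℂ)‖ < r ∨ r < ‖(z:ℂ)‖ := by
    intro z
    rcases le_or_gt (‖(z:ℂ)‖) r with h|h
    · left
      have h0 := hspec z z.2 h
      rw [h0]
      simpa using hr
    · right; exact h
  have hUlt : IsOpen {w : ℂ | ‖w‖ < r} :=
    isOpen_lt continuous_norm continuous_const
  have hUgt : IsOpen {w : ℂ | r < ‖w‖} :=
    isOpen_lt continuous_const continuous_norm
  have contK : ∀ F : ℂ → ℂ, (∀ z : ℂ, ‖z‖ < r → ContinuousAt F z) →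
      (∀ z : ℂ, r < ‖z‖ → ContinuousAt F z) →
      Continuous fun z : spectrum ℂ T => F z := by
    intro F h1 h2
    rw [continuous_iff_continuousAt]
    intro z
    exact ((hcov z).elim (h1 z) (h2 z)).comp continuous_subtype_val.continuousAt
  -- the indicator function and the auxiliary function
  have hfc : Continuous fun z : spectrum ℂ T =>
      (if ‖(z:ℂ)‖ ≤ r then (1:ℂ) else 0) := by
    refine contK (fun w => if ‖w‖ ≤ r then (1:ℂ) else 0) ?_ ?_
    · intro z hz
      have : (fun w : ℂ => if ‖w‖ ≤ r then (1:ℂ) else 0) =ᶠ[nhds z]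
          fun _ => (1:ℂ) := by
        filter_upwards [hUlt.mem_nhds hz] with w hw
        exact if_pos (le_of_lt hw)
      exact this.continuousAt
    · intro z hz
      have : (fun w : ℂ => if ‖w‖ ≤ r then (1:ℂ) else 0) =ᶠ[nhds z]
          fun _ => (0:ℂ) := by
        filter_upwards [hUgt.mem_nhds hz] with w hw
        exact if_neg (not_le.mpr hw)
      exact this.continuousAt
  have hg0c : Continuous fun z : spectrum ℂ T =>
      (if ‖(z:ℂ)‖ ≤ r then (0:ℂ) else (z:ℂ)⁻¹) := by
    refine contK (fun w => if ‖w‖ ≤ r then (0:ℂ) else w⁻¹) ?_ ?_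
    · intro z hz
      have : (fun w : ℂ => if ‖w‖ ≤ r then (0:ℂ) else w⁻¹) =ᶠ[nhds z]
          fun _ => (0:ℂ) := by
        filter_upwards [hUlt.mem_nhds hz] with w hw
        exact if_pos (le_of_lt hw)
      exact this.continuousAt
    · intro z hz
      have hz0 : z ≠ 0 := by
        intro h; rw [h] at hz; simp at hz; linarith
      have he : (fun w : ℂ => if ‖w‖ ≤ r then (0:ℂ) else w⁻¹) =ᶠ[nhds z]
          fun w => w⁻¹ := by
        filter_upwards [hUgt.mem_nhds hz] with w hw
        exact if_neg (not_le.mpr hw)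
      exact (continuousAt_inv₀ hz0).congr he.symm
  let fK : C(spectrum ℂ T, ℂ) := ⟨_, hfc⟩
  let g0K : C(spectrum ℂ T, ℂ) := ⟨_, hg0c⟩
  let idK : C(spectrum ℂ T, ℂ) := (ContinuousMap.id ℂ).restrict (spectrum ℂ T)
  have hid : φ idK = T := cfcHom_id hN
  -- the resolvent as an element of the functional calculus
  have hresc : ∀ θ : ℝ, Continuous fun z : spectrum ℂ T =>
      ((r:ℂ) * Complex.exp ((θ:ℂ) * Complex.I) - (z:ℂ))⁻¹ := by
    intro θ
    exact (continuous_const.sub continuous_subtype_val).inv₀ fun z => hne θ z z.2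
  let R : ℝ → C(spectrum ℂ T, ℂ) := fun θ => ⟨_, hresc θ⟩
  have hSφ : ∀ θ : ℝ, algebraMap ℂ (H →L[ℂ] H) ((r:ℂ) * Complex.exp ((θ:ℂ) * Complex.I)) - T
      = φ (algebraMap ℂ C(spectrum ℂ T, ℂ) ((r:ℂ) * Complex.exp ((θ:ℂ) * Complex.I)) - idK) := by
    intro θ
    rw [map_sub, hid]
    congr 1
    exact (AlgHomClass.commutes φ _).symm
  have hmul : ∀ θ : ℝ,
      (algebraMap ℂ C(spectrum ℂ T, ℂ) ((r:ℂ) * Complex.exp ((θ:ℂ) * Complex.I)) - idK) * R θ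
        = 1 := by
    intro θ
    ext z
    have ha : (algebraMap ℂ C(spectrum ℂ T, ℂ) ((r:ℂ) * Complex.exp ((θ:ℂ) * Complex.I))) z
        = (r:ℂ) * Complex.exp ((θ:ℂ) * Complex.I) := by simp
    simp only [ContinuousMap.mul_apply, ContinuousMap.sub_apply, ContinuousMap.one_apply,
      ha, ContinuousMap.coe_mk, ContinuousMap.restrict_apply,
      ContinuousMap.id_apply, R, idK]
    exact mul_inv_cancel₀ (hne θ z z.2)
  have hres : ∀ θ : ℝ,
      Ring.inverse (algebraMap ℂ (H →L[ℂ] H) ((r:ℂ) * Complex.exp ((θ:ℂ) * Complex.I)) - T)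
        = φ (R θ) := by
    intro θ
    have h1 : (algebraMap ℂ (H →L[ℂ] H) ((r:ℂ) * Complex.exp ((θ:ℂ) * Complex.I)) - T) * φ (R θ)
        = 1 := by
      rw [hSφ θ, ← map_mul, hmul θ, map_one]
    have h2 : φ (R θ) * (algebraMap ℂ (H →L[ℂ] H) ((r:ℂ) * Complex.exp ((θ:ℂ) * Complex.I)) - T)
        = 1 := by
      rw [hSφ θ, ← map_mul, mul_comm (R θ), hmul θ, map_one]
    exact Ring.inverse_unit ⟨_, φ (R θ), h1, h2⟩
  -- continuity of the resolvent family and integrability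
  have hRc : Continuous R := by
    have h2 : Continuous fun p : ℝ × (spectrum ℂ T) =>
        ((r:ℂ) * Complex.exp ((p.1:ℂ) * Complex.I) - (p.2:ℂ))⁻¹ := by
      apply Continuous.inv₀
      · fun_prop
      · intro p; exact hne p.1 p.2 p.2.2
    have : R = fun θ => (ContinuousMap.mk _ h2).curry θ :=
      funext fun θ => ContinuousMap.ext fun z => rfl
    rw [this]
    exact (ContinuousMap.mk _ h2).curry.continuous
  let G : ℝ → C(spectrum ℂ T, ℂ) := fun θ =>
    (Complex.I * (r:ℂ) * Complex.exp ((θ:ℂ) * Complex.I)) • R θ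
  have hGc : Continuous G := by
    show Continuous fun θ : ℝ => (Complex.I * (r:ℂ) * Complex.exp ((θ:ℂ) * Complex.I)) • R θ
    exact Continuous.smul (f := fun θ : ℝ => Complex.I * (r:ℂ) * Complex.exp ((θ:ℂ) * Complex.I))
      (by fun_prop) hRc
  have hGint : IntervalIntegrable G MeasureTheory.volume 0 (2*π) :=
    hGc.intervalIntegrable _ _
  let L : C(spectrum ℂ T, ℂ) →L[ℂ] (H →L[ℂ] H) :=
    { toLinearMap := φ.toAlgHom.toLinearMap
      cont := (cfcHom_isClosedEmbedding (R := ℂ) hN).continuous }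
  -- compute the integral in C(spectrum, ℂ)
  have hIntG : (∫ θ in (0:ℝ)..(2*π), G θ) = (2*(π:ℂ)*Complex.I) • fK := by
    ext z
    have heval := (ContinuousMap.evalCLM (R := ℂ) z).intervalIntegral_comp_comm hGint
    have h0 : (∫ θ in (0:ℝ)..(2*π), G θ) z
        = ∫ θ in (0:ℝ)..(2*π), (Complex.I * (r:ℂ) * Complex.exp ((θ:ℂ) * Complex.I))
            * ((r:ℂ) * Complex.exp ((θ:ℂ) * Complex.I) - (z:ℂ))⁻¹ := by
      calc (∫ θ in (0:ℝ)..(2*π), G θ) z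
          = (ContinuousMap.evalCLM (R := ℂ) z) (∫ θ in (0:ℝ)..(2*π), G θ) := rfl
        _ = ∫ θ in (0:ℝ)..(2*π), (ContinuousMap.evalCLM (R := ℂ) z) (G θ) := heval.symm
        _ = _ := by
            apply intervalIntegral.integral_congr
            intro θ _
            show (G θ) z = _
            simp [G, R, smul_eq_mul]
    have hcircle : (∮ w in C(0, r), (w - (z:ℂ))⁻¹)
        = ∫ θ in (0:ℝ)..(2*π), (Complex.I * (r:ℂ) * Complex.exp ((θ:ℂ) * Complex.I))
            * ((r:ℂ) * Complex.exp ((θ:ℂ) * Complex.I) - (z:ℂ))⁻¹ := by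
      simp only [circleIntegral, deriv_circleMap, circleMap, zero_add, smul_eq_mul]
      apply intervalIntegral.integral_congr
      intro θ _
      ring
    rw [h0, ← hcircle]
    have hsmul : ((2*(π:ℂ)*Complex.I) • fK) z
        = (2*(π:ℂ)*Complex.I) * (if ‖(z:ℂ)‖ ≤ r then (1:ℂ) else 0) := rfl
    rw [hsmul]
    rcases hcov z with hlt|hgt
    · rw [if_pos hlt.le, mul_one]
      exact circleIntegral.integral_sub_inv_of_mem_ball (by simpa [Complex.dist_eq] using hlt)
    · rw [if_neg (not_le.mpr hgt), mul_zero]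
      apply Complex.circleIntegral_eq_zero_of_differentiable_on_off_countable hr.le
        Set.countable_empty
      · apply ContinuousOn.inv₀
        · exact continuousOn_id.sub continuousOn_const
        · intro w hw h0'
          rw [sub_eq_zero] at h0'
          have hwr : ‖w‖ ≤ r := by
            simpa [Complex.dist_eq] using hw
          rw [h0'] at hwr
          linarith
      · intro w hw
        apply DifferentiableAt.inv
        · exact differentiableAt_id.sub (differentiableAt_const _)
        · intro h0'
          rw [sub_eq_zero] at h0'
          have hwr : ‖w‖ < r := by
            simpa [Complex.dist_eq] using hw.1
          rw [h0'] at hwr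
          linarith
  -- B is the functional calculus of the indicator function
  have hBphi : B = φ fK := by
    have h1 : ∀ θ : ℝ, (Complex.I * (r:ℂ) * Complex.exp ((θ:ℂ) * Complex.I)) •
        Ring.inverse
          (algebraMap ℂ (H →L[ℂ] H) ((r:ℂ) * Complex.exp ((θ:ℂ) * Complex.I)) - T)
        = L (G θ) := by
      intro θ
      rw [hres θ]
      simp only [G, map_smul]
      rfl
    rw [hB]
    simp only [h1]
    rw [L.intervalIntegral_comp_comm hGint, hIntG, map_smul, smul_smul,
      inv_mul_cancel₀ Complex.two_pi_I_ne_zero, one_smul]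
    rfl
  -- conclusion
  intro x
  constructor
  · rw [LinearMap.mem_ker]
    have hTB : T * B = 0 := by
      rw [hBphi]
      have h2 : idK * fK = 0 := by
        ext z
        simp only [ContinuousMap.mul_apply, ContinuousMap.zero_apply,
          ContinuousMap.restrict_apply, ContinuousMap.id_apply, ContinuousMap.coe_mk, idK, fK]
        rcases hcov z with hlt|hgt
        · have h0 : (z:ℂ) = 0 := hspec z z.2 hlt.le
          rw [h0, zero_mul]
        · rw [if_neg (not_le.mpr hgt), mul_zero]
      calc T * φ fK = φ idK * φ fK := by rw [hid]
        _ = φ (idK * fK) := (map_mul φ _ _).symm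
        _ = 0 := by rw [h2, map_zero]
    calc T (B x) = (T * B) x := rfl
      _ = 0 := by rw [hTB]; rfl
  · rw [Submodule.mem_orthogonal]
    intro y hy
    have hTy : T y = 0 := LinearMap.mem_ker.mp hy
    have hfact : fK = 1 - g0K * idK := by
      ext z
      simp only [ContinuousMap.sub_apply, ContinuousMap.one_apply, ContinuousMap.mul_apply,
        ContinuousMap.restrict_apply, ContinuousMap.id_apply, ContinuousMap.coe_mk,
        fK, g0K, idK]
      rcases hcov z with hlt|hgt
      · have h0 : (z:ℂ) = 0 := hspec z z.2 hlt.le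
        rw [if_pos hlt.le, if_pos hlt.le, h0, mul_zero, sub_zero]
      · have hz0 : (z:ℂ) ≠ 0 := by
          intro h; rw [h] at hgt; simp at hgt; linarith
        rw [if_neg (not_le.mpr hgt), if_neg (not_le.mpr hgt), inv_mul_cancel₀ hz0, sub_self]
    have hBy : B y = y := by
      rw [hBphi, hfact, map_sub, map_one, map_mul, hid]
      simp [ContinuousLinearMap.sub_apply, ContinuousLinearMap.mul_apply, hTy]
    have hBsa : IsSelfAdjoint B := by
      rw [hBphi]
      have hstar : star fK = fK := by
        ext z
        simp only [ContinuousMap.star_apply, ContinuousMap.coe_mk, fK]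
        split_ifs <;> simp
      show star (φ fK) = φ fK
      rw [← map_star, hstar]
    rw [inner_sub_right]
    have hinner : (inner ℂ y (B x) : ℂ) = inner ℂ y x := by
      rw [← ContinuousLinearMap.adjoint_inner_left B x y,
        ContinuousLinearMap.isSelfAdjoint_iff'.mp hBsa, hBy]
    rw [hinner, sub_self]
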